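/- For each d ≥ 1, the probability measure (1/2)δ_0 + (1/(2d)) Σ_{i=1}^d δ_{(d−i+1)/(2d−i+1)} converges weakly, as d → ∞, to the probability measure (1/2)δ_0 + (1/(2(1−t)²))·1_{(0,1/2)}(t) dt on [0,∞); that is, for every bounded continuous function f on [0,∞), (1/2)f(0) + (1/(2d)) Σ_{i=1}^d f((d−i+1)/(2d−i+1)) → (1/2)f(0) + (1/2)∫_0^{1/2} f(u)/(1−u)² du. -/

import Mathlib

open MeasureTheory Filter Set

lemma riemann_tendsto (g : ℝ → ℝ) (hg : Continuous g) (M : ℝ) (hM : ∀ x, |g x| ≤ M) :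
    Tendsto (fun n : ℕ => (1 / (n : ℝ)) * ∑ j ∈ Finset.Icc 1 n, g ((j : ℝ) / n)) atTop
      (nhds (∫ x in Set.Ioc (0:ℝ) 1, g x)) := by
  set G : ℕ → ℝ → ℝ := fun n x => g ((⌈(n : ℝ) * x⌉₊ : ℝ) / n) with hGdef
  have meas : ∀ n, Measurable (G n) := fun n =>
    hg.measurable.comp ((measurable_from_top.comp
      ((measurable_const.mul measurable_id).nat_ceil)).div_const _)
  have hint : ∀ n (a b : ℝ), IntegrableOn (G n) (Set.Ioc a b) := by
    intro n a b
    exact Measure.integrableOn_of_bounded (by simp) (meas n).aestronglyMeasurable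
      (ae_of_all _ fun x => by simpa using hM _)
  -- key: integral of step function equals Riemann sum
  have key : ∀ n : ℕ, 1 ≤ n → ∀ k : ℕ, k ≤ n →
      ∫ x in Set.Ioc (0:ℝ) ((k:ℝ)/n), G n x
        = (1/(n:ℝ)) * ∑ j ∈ Finset.Icc 1 k, g ((j:ℝ)/n) := by
    intro n hn
    have hn0 : (0:ℝ) < n := by exact_mod_cast hn
    intro k hk
    induction k with
    | zero => simp
    | succ k ih =>
      have hk' : k ≤ n := Nat.le_of_succ_le hk
      have hcast : ((k+1 : ℕ) : ℝ) = (k:ℝ) + 1 := by push_cast; ring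
      have h1 : (k:ℝ)/n ≤ ((k:ℝ)+1)/n := by
        apply (div_le_div_iff_of_pos_right hn0).mpr; linarith
      have h0 : (0:ℝ) ≤ (k:ℝ)/n := by positivity
      rw [hcast, ← Ioc_union_Ioc_eq_Ioc h0 h1,
        setIntegral_union (Set.Ioc_disjoint_Ioc_of_le le_rfl) measurableSet_Ioc (hint n _ _) (hint n _ _),
        ih hk']
      have hstep : ∫ x in Set.Ioc ((k:ℝ)/n) (((k:ℝ)+1)/n), G n x
          = (1/(n:ℝ)) * g (((k:ℝ)+1)/n) := by
        have heq : Set.EqOn (G n) (fun _ => g (((k:ℝ)+1)/n)) (Set.Ioc ((k:ℝ)/n) (((k:ℝ)+1)/n)) := by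
          intro x hx
          have hx1 : (k:ℝ) < (n:ℝ) * x := by
            rw [mul_comm]
            exact (div_lt_iff₀ hn0).mp hx.1
          have hx2 : (n:ℝ) * x ≤ (k:ℝ) + 1 := by
            rw [mul_comm]
            exact (le_div_iff₀ hn0).mp hx.2
          have hceil : ⌈(n:ℝ) * x⌉₊ = k + 1 := by
            rw [Nat.ceil_eq_iff (Nat.succ_ne_zero k)]
            constructor
            · simpa using hx1
            · push_cast; exact hx2
          simp only [G, hceil]
          push_cast
          rfl
        rw [setIntegral_congr_fun measurableSet_Ioc heq, setIntegral_const]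
        rw [Real.volume_real_Ioc]
        have : ((k:ℝ)+1)/n - (k:ℝ)/n = 1/n := by field_simp; ring
        rw [this, max_eq_left (by positivity)]
        simp [smul_eq_mul]
      rw [hstep]
      rw [Finset.sum_Icc_succ_top (by omega : 1 ≤ k + 1)]
      push_cast
      ring
  -- pointwise convergence
  have hptwise : ∀ x ∈ Set.Ioc (0:ℝ) 1, Tendsto (fun n => G n x) atTop (nhds (g x)) := by
    intro x hx
    have hx0 : 0 ≤ x := le_of_lt hx.1
    have hceil : Tendsto (fun n : ℕ => (⌈(n:ℝ) * x⌉₊ : ℝ) / n) atTop (nhds x) := by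
      apply tendsto_of_tendsto_of_tendsto_of_le_of_le' (g := fun _ : ℕ => x)
        (h := fun n : ℕ => x + 1/(n:ℝ)) tendsto_const_nhds
      · simpa using (tendsto_const_nhds : Tendsto (fun _ : ℕ => x) atTop (nhds x)).add (tendsto_one_div_atTop_nhds_zero_nat)
      · filter_upwards [eventually_ge_atTop 1] with n hn
        have hn0 : (0:ℝ) < n := by exact_mod_cast hn
        rw [le_div_iff₀ hn0]
        calc x * n = (n:ℝ) * x := by ring
        _ ≤ ⌈(n:ℝ) * x⌉₊ := Nat.le_ceil _
      · filter_upwards [eventually_ge_atTop 1] with n hn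
        have hn0 : (0:ℝ) < n := by exact_mod_cast hn
        rw [div_le_iff₀ hn0]
        have := Nat.ceil_lt_add_one (by positivity : (0:ℝ) ≤ (n:ℝ) * x)
        calc (⌈(n:ℝ) * x⌉₊ : ℝ) ≤ (n:ℝ) * x + 1 := le_of_lt this
        _ = (x + 1/n) * n := by field_simp
    exact (hg.tendsto x).comp hceil
  -- dominated convergence
  have hDCT : Tendsto (fun n => ∫ x in Set.Ioc (0:ℝ) 1, G n x) atTop
      (nhds (∫ x in Set.Ioc (0:ℝ) 1, g x)) := by
    apply tendsto_integral_of_dominated_convergence (fun _ => M)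
    · exact fun n => (meas n).aestronglyMeasurable
    · exact integrable_const M
    · exact fun n => ae_of_all _ fun x => by simpa using hM _
    · exact (ae_restrict_iff' measurableSet_Ioc).2 (ae_of_all _ hptwise)
  apply hDCT.congr'
  filter_upwards [eventually_ge_atTop 1] with n hn
  have hn0 : (0:ℝ) < n := by exact_mod_cast hn
  have := key n hn n le_rfl
  rw [div_self (ne_of_gt hn0)] at this
  exact this


/-- the measures `(1/2)δ_0 + (1/(2d)) Σ_{i=1}^d δ_{(d−i+1)/(2d−i+1)}`
converge weakly to `(1/2)δ_0 + (1/(2(1−t)²))·1_{(0,1/2)}(t) dt`: for every bounded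
continuous `f` on `[0,∞)`,
`(1/2)f(0) + (1/(2d)) Σ f((d−i+1)/(2d−i+1)) → (1/2)f(0) + (1/2)∫_0^{1/2} f(u)/(1−u)² du`. -/
theorem empirical_tendsto_half_dirac :
    ∀ f : ℝ → ℝ, Continuous f → (∃ M, ∀ x, |f x| ≤ M) →
      Tendsto (fun d : ℕ =>
          (1 / 2 : ℝ) * f 0 + (1 / (2 * (d : ℝ))) *
            ∑ i ∈ Finset.Icc 1 d, f (((d : ℝ) - i + 1) / (2 * (d : ℝ) - i + 1)))
        atTop
        (nhds ((1 / 2 : ℝ) * f 0 +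
          (1 / 2 : ℝ) * ∫ u in Set.Ioo (0 : ℝ) (1 / 2), f u / (1 - u) ^ 2)) := by
  intro f hf ⟨M, hM⟩
  set φ : ℝ → ℝ := fun p => max p 0 / (1 + max p 0) with hφdef
  have hφcont : Continuous φ := by
    apply Continuous.div (continuous_id.max continuous_const)
      (continuous_const.add (continuous_id.max continuous_const))
    intro x
    have : (0:ℝ) ≤ max x 0 := le_max_right _ _
    exact ne_of_gt (show (0:ℝ) < 1 + max x 0 by linarith)
  set g : ℝ → ℝ := fun p => f (φ p) with hgdef
  have hgcont : Continuous g := hf.comp hφcont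
  have hgM : ∀ x, |g x| ≤ M := fun x => hM _
  -- reindex sum
  have hre : ∀ d : ℕ, ∑ i ∈ Finset.Icc 1 d, f (((d : ℝ) - i + 1) / (2 * (d : ℝ) - i + 1))
      = ∑ j ∈ Finset.Icc 1 d, g ((j : ℝ) / d) := by
    intro d
    rcases Nat.eq_zero_or_pos d with rfl | hd
    · simp
    have hd0 : (0:ℝ) < d := by exact_mod_cast hd
    apply Finset.sum_nbij' (fun i => d + 1 - i) (fun j => d + 1 - j)
    · intro i hi; simp only [Finset.mem_Icc] at *; omega
    · intro j hj; simp only [Finset.mem_Icc] at *; omega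
    · intro i hi; simp only [Finset.mem_Icc] at hi; omega
    · intro j hj; simp only [Finset.mem_Icc] at hj; omega
    · intro i hi
      simp only [Finset.mem_Icc] at hi
      have h1 : ((d + 1 - i : ℕ) : ℝ) = (d:ℝ) + 1 - i := by
        have : i ≤ d + 1 := by omega
        push_cast [Nat.cast_sub this]
        ring
      have hj0 : (0:ℝ) < (d:ℝ) + 1 - (i:ℝ) := by
        have : (i:ℝ) ≤ d := by exact_mod_cast hi.2
        linarith
      have hden : (0:ℝ) < 2 * (d:ℝ) - i + 1 := by
        have : (i:ℝ) ≤ d := by exact_mod_cast hi.2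
        linarith
      simp only [hgdef, hφdef, h1]
      congr 1
      have hmax : max (((d:ℝ) + 1 - i) / d) 0 = ((d:ℝ) + 1 - i) / d :=
        max_eq_left (by positivity)
      rw [hmax]
      rw [div_div, mul_add, mul_one, mul_div_cancel₀ _ hd0.ne']
      congr 1 <;> ring
  have hmain : Tendsto (fun d : ℕ => (1 / (d:ℝ)) * ∑ j ∈ Finset.Icc 1 d, g ((j : ℝ) / d))
      atTop (nhds (∫ x in Set.Ioc (0:ℝ) 1, g x)) := riemann_tendsto g hgcont M hgM
  -- change of variables
  have hcov : ∫ x in Set.Ioc (0:ℝ) 1, g x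
      = ∫ u in Set.Ioo (0 : ℝ) (1 / 2), f u / (1 - u) ^ 2 := by
    have hψ : ∀ u ∈ Set.uIcc (0:ℝ) (1/2), HasDerivAt (fun u : ℝ => u / (1 - u))
        (((1 - u)^2)⁻¹) u := by
      intro u hu
      rw [Set.uIcc_of_le (by norm_num)] at hu
      have hne : (1:ℝ) - u ≠ 0 := by
        have := hu.2; intro h; rw [sub_eq_zero] at h; rw [← h] at this; norm_num at this
      have := (hasDerivAt_id u).div ((hasDerivAt_const u (1:ℝ)).sub (hasDerivAt_id u)) hne
      convert this using 1
      · rfl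
      · rfl
      · rfl
      simp only [Pi.sub_apply, id]
      field_simp
      ring
    have h' : ContinuousOn (fun u : ℝ => ((1 - u)^2)⁻¹) (Set.uIcc (0:ℝ) (1/2)) := by
      apply ContinuousOn.inv₀ (by fun_prop)
      intro u hu
      rw [Set.uIcc_of_le (by norm_num)] at hu
      have := hu.2
      have : (1:ℝ) - u ≠ 0 := by intro h; rw [sub_eq_zero] at h; rw [← h] at this; norm_num at this
      positivity
    have hcv := intervalIntegral.integral_comp_smul_deriv hψ h' hgcont
    simp only [show (0:ℝ)/(1-0) = 0 by norm_num, show (1:ℝ)/2/(1-1/2) = 1 by norm_num] at hcv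
    have hLHS : ∫ u in (0:ℝ)..(1/2), ((1 - u)^2)⁻¹ • (g ∘ (fun u : ℝ => u / (1 - u))) u
        = ∫ u in (0:ℝ)..(1/2), f u / (1 - u) ^ 2 := by
      apply intervalIntegral.integral_congr
      intro u hu
      rw [Set.uIcc_of_le (by norm_num)] at hu
      have hu1 : u < 1 := lt_of_le_of_lt hu.2 (by norm_num)
      have hune : (1:ℝ) - u ≠ 0 := by intro h; rw [sub_eq_zero] at h; linarith
      have hψu : (0:ℝ) ≤ u / (1 - u) := div_nonneg hu.1 (by linarith)
      simp only [Function.comp, hgdef, hφdef, smul_eq_mul]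
      have hmax : max (u / (1 - u)) 0 = u / (1 - u) := max_eq_left hψu
      rw [hmax]
      have harg : u / (1 - u) / (1 + u / (1 - u)) = u := by
        field_simp
        ring
      rw [harg]
      ring
    rw [hLHS] at hcv
    rw [← intervalIntegral.integral_of_le (by norm_num : (0:ℝ) ≤ 1)]
    rw [← hcv, intervalIntegral.integral_of_le (by norm_num : (0:ℝ) ≤ 1/2),
      integral_Ioc_eq_integral_Ioo]
  have : Tendsto (fun d : ℕ =>
      (1 / 2 : ℝ) * f 0 + (1/2 : ℝ) * ((1 / (d:ℝ)) * ∑ j ∈ Finset.Icc 1 d, g ((j : ℝ) / d)))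
      atTop (nhds ((1 / 2 : ℝ) * f 0 + (1/2 : ℝ) * ∫ x in Set.Ioc (0:ℝ) 1, g x)) :=
    tendsto_const_nhds.add (hmain.const_mul _)
  rw [hcov] at this
  apply this.congr
  intro d
  rw [hre d]
  ring
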